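/- For every prime p, Σ_{k=0}^p (-1)^k · S(k) ≡ 0 (mod p). -/

import Mathlib

lemma derange_alt (m : ℕ) :
    (-1 : ℤ) ^ m * numDerangements m =
      ∑ i ∈ Finset.range (m + 1), (-1 : ℤ) ^ i * i.factorial * m.choose i := by
  rw [← Finset.sum_range_reflect]
  rw [numDerangements_sum, Finset.mul_sum]
  simp only [Nat.add_sub_cancel]
  apply Finset.sum_congr rfl
  intro k hk
  have hkm : k ≤ m := Finset.mem_range_succ_iff.mp hk
  have h1 : (k + 1).ascFactorial (m - k) = (m - k).factorial * m.choose (m - k) := by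
    have := Nat.ascFactorial_eq_factorial_mul_choose k (m - k)
    rwa [Nat.add_sub_cancel' hkm] at this
  rw [h1]
  have hsign : (-1 : ℤ) ^ (m - k) * (-1 : ℤ) ^ k = (-1 : ℤ) ^ m := by
    rw [← pow_add, Nat.sub_add_cancel hkm]
  have hk2 : (-1 : ℤ) ^ k * (-1 : ℤ) ^ k = 1 := by
    rw [← pow_add, ← two_mul, pow_mul, neg_one_sq, one_pow]
  have h3 : (-1 : ℤ) ^ (m - k) = (-1 : ℤ) ^ m * (-1 : ℤ) ^ k := by
    rw [← hsign, mul_assoc, hk2, mul_one]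
  push_cast
  rw [h3]
  ring

lemma key_sum (n : ℕ) :
    ∑ k ∈ Finset.range (n + 1), (-1 : ℤ) ^ k * numDerangements k =
      ∑ i ∈ Finset.range (n + 1), (-1 : ℤ) ^ i * i.factorial * (n + 1).choose (i + 1) := by
  induction n with
  | zero => simp
  | succ n ih =>
    rw [Finset.sum_range_succ, ih, derange_alt (n + 1)]
    have hsplit : ∀ i ∈ Finset.range (n + 2),
        (-1 : ℤ) ^ i * i.factorial * (n + 2).choose (i + 1) =
          (-1 : ℤ) ^ i * i.factorial * (n + 1).choose i
            + (-1 : ℤ) ^ i * i.factorial * (n + 1).choose (i + 1) := by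
      intro i _
      rw [Nat.choose_succ_succ (n + 1) i]
      push_cast
      ring
    rw [Finset.sum_congr rfl hsplit, Finset.sum_add_distrib]
    have hlast : ∑ i ∈ Finset.range (n + 2),
        (-1 : ℤ) ^ i * i.factorial * (n + 1).choose (i + 1) =
        ∑ i ∈ Finset.range (n + 1), (-1 : ℤ) ^ i * i.factorial * (n + 1).choose (i + 1) := by
      rw [Finset.sum_range_succ, Nat.choose_succ_self]
      simp
    rw [hlast]
    ring

theorem alternating_sum_subfactorial (p : ℕ) (hp : p.Prime) :
    (∑ k ∈ Finset.range (p + 1), (-1 : ℤ) ^ k * numDerangements k) ≡ 0 [ZMOD p] := by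
  haveI := Fact.mk hp
  have hp2 : 2 ≤ p := hp.two_le
  rw [key_sum p, Int.modEq_zero_iff_dvd, ← ZMod.intCast_zmod_eq_zero_iff_dvd]
  push_cast
  have hsub : ({0, p - 1} : Finset ℕ) ⊆ Finset.range (p + 1) := by
    intro i hi
    simp only [Finset.mem_insert, Finset.mem_singleton] at hi
    rcases hi with rfl | rfl <;> simp [Finset.mem_range] <;> omega
  rw [← Finset.sum_subset hsub]
  · have hne : (0 : ℕ) ≠ p - 1 := by omega
    rw [Finset.sum_pair hne]
    have hchoose : (p + 1).choose (p - 1 + 1) = p + 1 := by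
      have : p - 1 + 1 = p := by omega
      rw [this, Nat.choose_succ_self_right]
    rw [hchoose]
    have hwilson : ((p - 1).factorial : ZMod p) = -1 := ZMod.wilsons_lemma p
    have hpow : (-1 : ZMod p) ^ (p - 1) = 1 := by
      have hne0 : (-1 : ZMod p) ≠ 0 := by
        simpa using (neg_ne_zero.mpr (one_ne_zero : (1 : ZMod p) ≠ 0))
      exact ZMod.pow_card_sub_one_eq_one hne0
    have hpcast : ((p : ℕ) : ZMod p) = 0 := ZMod.natCast_self p
    rw [hwilson, hpow]
    simp [Nat.choose_one_right, hpcast]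
  · intro i hi hnot
    simp only [Finset.mem_insert, Finset.mem_singleton, not_or] at hnot
    obtain ⟨h0, h1⟩ := hnot
    rw [Finset.mem_range] at hi
    rcases eq_or_ne i p with heq | hip
    · subst heq
      have : ((i.factorial : ℕ) : ZMod i) = 0 := by
        rw [ZMod.natCast_eq_zero_iff]
        exact Nat.dvd_factorial (by omega) le_rfl
      rw [this]; ring
    · have hdvd : p ∣ (p + 1).choose (i + 1) := by
        apply hp.dvd_choose (a := i + 1) (b := p + 1) <;> omega
      have : (((p + 1).choose (i + 1) : ℕ) : ZMod p) = 0 := by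
        rw [ZMod.natCast_eq_zero_iff]; exact hdvd
      rw [this]; ring
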